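/- Let D be a group with a bi-invariant partial order induced by a normal cone, with set of dominants C⁺, and assume γ(f,g) > 0 for all f, g ∈ C⁺. Then the function K(f,g) = max{log γ(f,g), log γ(g,f)} on C⁺ × C⁺ is nonnegative, symmetric, vanishes on the diagonal, and satisfies the triangle inequality. -/
import Mathlib


open Filter Real

/-- In a group `D` with a bi-invariant partial order induced by a normal
cone, with set of dominants `C⁺`, and relative growth `gam` (assumed positive on
dominants), the function `K(f,g) = max{log γ(f,g), log γ(g,f)}` is nonnegative,
symmetric, vanishes on the diagonal, and satisfies the triangle inequality. -/
theorem K_is_pseudometric {D : Type*} [Group D] (C : Set D)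
    (hmul : ∀ a b, a ∈ C → b ∈ C → a * b ∈ C)
    (hconj : ∀ a b, a ∈ C → b * a * b⁻¹ ∈ C)
    (hone : (1 : D) ∈ C)
    (hanti : ∀ a b : D, a * b⁻¹ ∈ C → b * a⁻¹ ∈ C → a = b)
    (Cplus : Set D)
    (hCplus : ∀ f, f ∈ Cplus ↔ f ∈ C ∧ f ≠ 1 ∧ ∀ x : D, ∃ n : ℕ, f ^ n * x⁻¹ ∈ C)
    (γseq : D → D → ℕ → ℤ) (gam : D → D → ℝ)
    (hγ : ∀ f ∈ Cplus, ∀ g ∈ Cplus, ∀ n : ℕ,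
      IsLeast {p : ℤ | f ^ p * (g ^ n)⁻¹ ∈ C} (γseq f g n))
    (hlim : ∀ f ∈ Cplus, ∀ g ∈ Cplus,
      Tendsto (fun n : ℕ => (γseq f g n : ℝ) / n) atTop (nhds (gam f g)))
    (hpos : ∀ f ∈ Cplus, ∀ g ∈ Cplus, 0 < gam f g) :
    let K : D → D → ℝ := fun f g => max (log (gam f g)) (log (gam g f))
    (∀ f ∈ Cplus, ∀ g ∈ Cplus, 0 ≤ K f g) ∧
    (∀ f ∈ Cplus, ∀ g ∈ Cplus, K f g = K g f) ∧
    (∀ f ∈ Cplus, K f f = 0) ∧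
    (∀ f ∈ Cplus, ∀ g ∈ Cplus, ∀ h ∈ Cplus, K f h ≤ K f g + K g h) := by
  -- basic cone facts
  have hpowC : ∀ f : D, f ∈ C → ∀ n : ℕ, f ^ n ∈ C := by
    intro f hf n
    induction n with
    | zero => simpa using hone
    | succ n ih => rw [pow_succ]; exact hmul _ _ ih hf
  have hzpowC : ∀ f : D, f ∈ C → ∀ p : ℤ, 0 ≤ p → f ^ p ∈ C := by
    intro f hf p hp
    lift p to ℕ using hp
    rw [zpow_natCast]; exact hpowC f hf p
  have htrans : ∀ a b c : D, a * b⁻¹ ∈ C → b * c⁻¹ ∈ C → a * c⁻¹ ∈ C := by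
    intro a b c h1 h2
    have := hmul _ _ h1 h2
    simpa [mul_assoc] using this
  have hpow_mono : ∀ f : D, f ∈ C → ∀ p q : ℤ, q ≤ p → f ^ p * (f ^ q)⁻¹ ∈ C := by
    intro f hf p q h
    have e : f ^ p * (f ^ q)⁻¹ = f ^ (p - q) := by
      rw [zpow_sub]
    rw [e]; exact hzpowC f hf _ (by omega)
  have hnontriv : ∀ f ∈ Cplus, ∀ k : ℤ, f ^ k = 1 → k = 0 := by
    intro f hf k hk
    by_contra hk0
    obtain ⟨hfC, hfne, -⟩ := (hCplus f).1 hf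
    have h1 : f ^ |k| = 1 := by
      rcases abs_choice k with h | h
      · rw [h]; exact hk
      · rw [h, zpow_neg, hk, inv_one]
    have hinv : f⁻¹ ∈ C := by
      have h2 : f ^ (|k| - 1) ∈ C := hzpowC f hfC _ (by
        have := abs_pos.2 hk0; omega)
      have e : f ^ (|k| - 1) = f⁻¹ := by
        rw [zpow_sub, h1, zpow_one, one_mul]
      rw [← e]; exact h2
    exact hfne (hanti f 1 (by simpa using hfC) (by simpa using hinv))
  -- γseq f f n = n
  have hγff : ∀ f ∈ Cplus, ∀ n : ℕ, γseq f f n = n := by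
    intro f hf n
    obtain ⟨hfC, -, -⟩ := (hCplus f).1 hf
    have h := hγ f hf f hf n
    have hmem : (n : ℤ) ∈ {p : ℤ | f ^ p * ((f : D) ^ n)⁻¹ ∈ C} := by
      simp [Set.mem_setOf_eq, zpow_natCast, hone]
    have hle : γseq f f n ≤ n := h.2 hmem
    rcases eq_or_lt_of_le hle with he | hlt
    · exact he
    · exfalso
      have h1 : f ^ γseq f f n * (f ^ (n : ℤ))⁻¹ ∈ C := by
        have := h.1
        simpa [Set.mem_setOf_eq, zpow_natCast] using this
      have h2 : f ^ (n : ℤ) * (f ^ γseq f f n)⁻¹ ∈ C :=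
        hpow_mono f hfC _ _ hle
      have := hanti _ _ h1 h2
      have := hnontriv f hf (γseq f f n - n) (by
        rw [zpow_sub, this, mul_inv_cancel])
      omega
  have hgamff : ∀ f ∈ Cplus, gam f f = 1 := by
    intro f hf
    have h1 := hlim f hf f hf
    have h2 : Tendsto (fun n : ℕ => (γseq f f n : ℝ) / n) atTop (nhds 1) := by
      apply Tendsto.congr' _ tendsto_const_nhds
      filter_upwards [eventually_ge_atTop 1] with n hn
      rw [hγff f hf n]
      push_cast
      rw [div_self (Nat.cast_ne_zero.2 (by omega))]
    exact tendsto_nhds_unique h1 h2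
  -- positivity of γseq
  have hγpos : ∀ f ∈ Cplus, ∀ g ∈ Cplus, ∀ n : ℕ, 1 ≤ n → 1 ≤ γseq f g n := by
    intro f hf g hg n hn
    obtain ⟨hfC, -, -⟩ := (hCplus f).1 hf
    obtain ⟨hgC, -, -⟩ := (hCplus g).1 hg
    by_contra hlt
    push_neg at hlt
    have h1 : f ^ γseq f g n * (g ^ n)⁻¹ ∈ C := (hγ f hf g hg n).1
    have hgn : g ^ n * (1 : D)⁻¹ ∈ C := by simpa using hpowC g hgC n
    have h2 : f ^ γseq f g n * (1 : D)⁻¹ ∈ C := htrans _ _ _ h1 hgn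
    have h3 : (1 : D) * (f ^ γseq f g n)⁻¹ ∈ C := by
      rw [one_mul, ← zpow_neg]
      exact hzpowC f hfC _ (by omega)
    have h4 : f ^ γseq f g n = 1 := hanti _ _ h2 h3
    have h5 := hnontriv f hf _ h4
    rw [h5] at h1
    have h6 : (1 : D) * (g ^ n)⁻¹ ∈ C := by simpa using h1
    have h7 : g ^ n = 1 := hanti _ _ hgn h6
    have := hnontriv g hg n (by rw [zpow_natCast, h7])
    omega
  -- submultiplicativity of gam
  have hsub : ∀ f ∈ Cplus, ∀ g ∈ Cplus, ∀ h ∈ Cplus,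
      gam f h ≤ gam f g * gam g h := by
    intro f hf g hg h hh
    obtain ⟨hfC, -, -⟩ := (hCplus f).1 hf
    obtain ⟨hgC, -, -⟩ := (hCplus g).1 hg
    set m : ℕ → ℕ := fun n => (γseq g h n).toNat with hm
    have hm1 : ∀ n : ℕ, 1 ≤ n → 1 ≤ m n := by
      intro n hn
      have := hγpos g hg h hh n hn
      simp [hm]; omega
    have hmc : ∀ n : ℕ, 1 ≤ n → (m n : ℤ) = γseq g h n := by
      intro n hn
      have := hγpos g hg h hh n hn
      simp [hm]; omega
    -- pointwise bound
    have hptw : ∀ n : ℕ, 1 ≤ n → γseq f h n ≤ γseq f g (m n) := by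
      intro n hn
      have h1 : f ^ γseq f g (m n) * (g ^ (m n))⁻¹ ∈ C := (hγ f hf g hg (m n)).1
      have h2 : g ^ γseq g h n * (h ^ n)⁻¹ ∈ C := (hγ g hg h hh n).1
      have h2' : g ^ (m n) * (h ^ n)⁻¹ ∈ C := by
        rw [← zpow_natCast g (m n), hmc n hn]; exact h2
      have h3 : f ^ γseq f g (m n) * (h ^ n)⁻¹ ∈ C := htrans _ _ _ h1 h2'
      exact (hγ f hf h hh n).2 h3
    -- m tends to infinity
    have hmdiv : Tendsto (fun n : ℕ => (m n : ℝ) / n) atTop (nhds (gam g h)) := by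
      apply Tendsto.congr' _ (hlim g hg h hh)
      filter_upwards [eventually_ge_atTop 1] with n hn
      rw [← hmc n hn]; push_cast; ring
    have hmtop : Tendsto m atTop atTop := by
      rw [← tendsto_natCast_atTop_iff (R := ℝ)]
      have hL := hpos g hg h hh
      have h1 : ∀ᶠ n : ℕ in atTop, gam g h / 2 * n ≤ (m n : ℝ) := by
        have h2 : ∀ᶠ n : ℕ in atTop, gam g h / 2 < (m n : ℝ) / n :=
          hmdiv.eventually_const_lt (by linarith)
        filter_upwards [h2, eventually_ge_atTop 1] with n hn hn1
        have hn0 : (0 : ℝ) < n := by exact_mod_cast hn1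
        rw [lt_div_iff₀ hn0] at hn
        linarith
      exact tendsto_atTop_mono' _ h1
        ((tendsto_natCast_atTop_atTop (R := ℝ)).const_mul_atTop (by linarith))
    have hcomp : Tendsto (fun n : ℕ => (γseq f g (m n) : ℝ) / (m n)) atTop
        (nhds (gam f g)) := (hlim f hf g hg).comp hmtop
    have hprod : Tendsto (fun n : ℕ => (γseq f g (m n) : ℝ) / n) atTop
        (nhds (gam f g * gam g h)) := by
      apply Tendsto.congr' _ (hcomp.mul hmdiv)
      filter_upwards [eventually_ge_atTop 1] with n hn
      have hmn : (0 : ℝ) < (m n : ℝ) := by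
        have := hm1 n hn; positivity
      field_simp
    refine le_of_tendsto_of_tendsto (hlim f hf h hh) hprod ?_
    filter_upwards [eventually_ge_atTop 1] with n hn
    have hn0 : (0 : ℝ) < n := by exact_mod_cast hn
    have := hptw n hn
    have : (γseq f h n : ℝ) ≤ (γseq f g (m n) : ℝ) := by exact_mod_cast this
    gcongr
  -- gam(f,g) * gam(g,f) ≥ 1
  have hgprod : ∀ f ∈ Cplus, ∀ g ∈ Cplus, 1 ≤ gam f g * gam g f := by
    intro f hf g hg
    have := hsub f hf g hg f hf
    rw [hgamff f hf] at this
    exact this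
  intro K
  have hKnn : ∀ f ∈ Cplus, ∀ g ∈ Cplus, 0 ≤ K f g := by
    intro f hf g hg
    have h1 := hgprod f hf g hg
    have hfg := hpos f hf g hg
    have hgf := hpos g hg f hf
    have h2 : 0 ≤ log (gam f g) + log (gam g f) := by
      rw [← log_mul (ne_of_gt hfg) (ne_of_gt hgf)]
      exact log_nonneg h1
    by_contra hneg
    push_neg at hneg
    have ha : log (gam f g) < 0 := lt_of_le_of_lt (le_max_left _ _) hneg
    have hb : log (gam g f) < 0 := lt_of_le_of_lt (le_max_right _ _) hneg
    linarith
  refine ⟨hKnn, ?_, ?_, ?_⟩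
  · intro f _ g _
    exact max_comm _ _
  · intro f hf
    show max (log (gam f f)) (log (gam f f)) = 0
    rw [hgamff f hf, log_one, max_self]
  · intro f hf g hg h hh
    have t1 : log (gam f h) ≤ K f g + K g h := by
      calc log (gam f h) ≤ log (gam f g * gam g h) := by
            apply log_le_log (hpos f hf h hh) (hsub f hf g hg h hh)
        _ = log (gam f g) + log (gam g h) :=
            log_mul (ne_of_gt (hpos f hf g hg)) (ne_of_gt (hpos g hg h hh))
        _ ≤ K f g + K g h := add_le_add (le_max_left _ _) (le_max_left _ _)
    have t2 : log (gam h f) ≤ K f g + K g h := by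
      calc log (gam h f) ≤ log (gam h g * gam g f) := by
            apply log_le_log (hpos h hh f hf) (hsub h hh g hg f hf)
        _ = log (gam h g) + log (gam g f) :=
            log_mul (ne_of_gt (hpos h hh g hg)) (ne_of_gt (hpos g hg f hf))
        _ ≤ K f g + K g h := by
            rw [add_comm (K f g)]
            exact add_le_add (le_max_right _ _) (le_max_right _ _)
    exact max_le t1 t2
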